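/- For every η ≥ 0, the region D^η = { x in the nonnegative orthant of ℝ⁷ : N ≤ Λ/μ + η } is positively invariant for the COVID-19 system: every solution x with x(0) ∈ D^η satisfies x(t) ∈ D^η for all t ≥ 0. -/

import Mathlib

open scoped BigOperators

/-- The vector field of the deterministic SQEAIHR COVID-19 model.
State: `x = (S, Q, E, A, I, H, R)` indexed by `Fin 7`. -/
noncomputable def covidF (Λ b q lam μ σ εA γA dA εI γI dI γH dH θ p β₁ β₂ : ℝ)
    (x : Fin 7 → ℝ) : Fin 7 → ℝ :=
  ![Λ - (β₁ - β₂ * x 4 / (b + x 4)) * x 0 * (x 4 + θ * x 3) + lam * x 1 - (μ + q) * x 0,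
    q * x 0 - (μ + lam) * x 1,
    (β₁ - β₂ * x 4 / (b + x 4)) * x 0 * (x 4 + θ * x 3) - (μ + σ) * x 2,
    (1 - p) * σ * x 2 - (μ + εA + γA + dA) * x 3,
    σ * p * x 2 - (μ + εI + γI + dI) * x 4,
    εI * x 4 + εA * x 3 - (μ + dH + γH) * x 5,
    γH * x 5 + γI * x 4 + γA * x 3 - μ * x 6]

/-- A solution of the system on `[0, ∞)`: a function differentiable (within `[0,∞)`) whose
derivative equals the vector field at every `t ≥ 0`. -/
def IsSolution (F : (Fin 7 → ℝ) → Fin 7 → ℝ) (x : ℝ → Fin 7 → ℝ) : Prop :=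
  ∀ t : ℝ, 0 ≤ t → HasDerivWithinAt x (F (x t)) (Set.Ici (0 : ℝ)) t

set_option maxHeartbeats 1000000 in
lemma covid_key (Λ b q lam μ σ εA γA dA εI γI dI γH dH θ p β₁ β₂ M : ℝ)
    (hΛ : 0 < Λ) (hb : 0 < b) (hq : 0 < q) (hlam : 0 < lam) (hμ : 0 < μ)
    (hσ : 0 < σ) (hεA : 0 < εA) (hγA : 0 < γA) (hdA : 0 < dA)
    (hεI : 0 < εI) (hγI : 0 < γI) (hdI : 0 < dI) (hγH : 0 < γH) (hdH : 0 < dH)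
    (hθ : θ ∈ Set.Ioo (0 : ℝ) 1) (hp : p ∈ Set.Ioo (0 : ℝ) 1)
    (hβ₂ : 0 < β₂) (hβ : β₂ ≤ β₁) (hM : b / 2 ≤ M)
    (y : Fin 7 → ℝ) (hbox : ∀ i, -(b/2) ≤ y i ∧ y i ≤ M) (i : Fin 7) (hyi : y i ≤ 0) :
    -(covidF Λ b q lam μ σ εA γA dA εI γI dI γH dH θ p β₁ β₂ y i) ≤
      (2*(β₁ + 2*β₂*M/b)*M + lam + q + σ + εI + εA + γI + γA + γH) * (∑ j, max (-(y j)) 0) := by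
  have hM0 : (0:ℝ) ≤ M := le_trans (by positivity) hM
  have hβ₁ : 0 < β₁ := lt_of_lt_of_le hβ₂ hβ
  obtain ⟨C, hCdef⟩ : ∃ C : ℝ, C = β₁ + 2*β₂*M/b := ⟨_, rfl⟩
  have hC : 0 ≤ C := by rw [hCdef]; positivity
  obtain ⟨K, hKdef⟩ : ∃ K : ℝ, K = 2*C*M + lam + q + σ + εI + εA + γI + γA + γH := ⟨_, rfl⟩
  have hK : 0 ≤ K := by rw [hKdef]; positivity
  have hCM2 : 0 ≤ 2*C*M := by positivity
  have hCM : 0 ≤ C*M := by positivity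
  have hφ : (∑ j, max (-(y j)) 0) = max (-(y 0)) 0 + max (-(y 1)) 0 + max (-(y 2)) 0
      + max (-(y 3)) 0 + max (-(y 4)) 0 + max (-(y 5)) 0 + max (-(y 6)) 0 :=
    Fin.sum_univ_seven _
  rw [hφ, ← hCdef, ← hKdef]
  have hn : ∀ j : Fin 7, 0 ≤ max (-(y j)) 0 ∧ -(y j) ≤ max (-(y j)) 0 :=
    fun j => ⟨le_max_right _ _, le_max_left _ _⟩
  obtain ⟨hn0, hn0'⟩ := hn 0; obtain ⟨hn1, hn1'⟩ := hn 1; obtain ⟨hn2, hn2'⟩ := hn 2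
  obtain ⟨hn3, hn3'⟩ := hn 3; obtain ⟨hn4, hn4'⟩ := hn 4; obtain ⟨hn5, hn5'⟩ := hn 5
  obtain ⟨hn6, hn6'⟩ := hn 6
  have hden : 0 < b + y 4 := by linarith [(hbox 4).1]
  obtain ⟨c, hcdef⟩ : ∃ c : ℝ, c = β₁ - β₂ * y 4 / (b + y 4) := ⟨_, rfl⟩
  have hc0 : 0 ≤ c := by
    rw [hcdef, sub_nonneg, div_le_iff₀ hden]
    linarith [mul_nonneg (sub_nonneg.2 hβ) (by linarith [(hbox 4).1] : (0:ℝ) ≤ y 4 + b/2),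
      mul_nonneg hβ₂.le hb.le, mul_nonneg hβ₁.le hb.le]
  have hcC : c ≤ C := by
    rw [hcdef, hCdef]
    have he : (0:ℝ) ≤ 2*β₂*M/b := by positivity
    have heb : 2*β₂*M/b*b = 2*β₂*M := div_mul_cancel₀ _ hb.ne'
    have h2 : -(2*β₂*M/b) * (b + y 4) ≤ β₂ * y 4 := by
      linarith [heb, mul_nonneg he (by linarith [(hbox 4).1] : (0:ℝ) ≤ y 4 + b/2),
        mul_nonneg hβ₂.le (by linarith [(hbox 4).1, hM] : (0:ℝ) ≤ y 4 + M)]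
    have h3 : -(2*β₂*M/b) ≤ β₂ * y 4 / (b + y 4) := by
      rw [le_div_iff₀ hden]; exact h2
    linarith
  obtain ⟨u, hudef⟩ : ∃ u : ℝ, u = y 4 + θ * y 3 := ⟨_, rfl⟩
  have hθM : θ * M ≤ 1 * M := mul_le_mul_of_nonneg_right hθ.2.le hM0
  have hu1 : u ≤ 2*M := by
    have h1 : θ * y 3 ≤ θ * M := mul_le_mul_of_nonneg_left (hbox 3).2 hθ.1.le
    rw [hudef]; linarith [(hbox 4).2, hM]
  have hu2 : -(2*M) ≤ u := by
    have h1 : θ * (-M) ≤ θ * y 3 := mul_le_mul_of_nonneg_left (by linarith [(hbox 3).1]) hθ.1.le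
    rw [hudef]; linarith [(hbox 4).1, hM]
  have h2M : (0:ℝ) ≤ 2*M := by linarith
  have hcu1 : c * u ≤ C * (2*M) := by
    linarith [mul_nonneg (sub_nonneg.2 hcC) h2M, mul_nonneg hc0 (by linarith : 0 ≤ 2*M - u)]
  have hcu2 : -(C * (2*M)) ≤ c * u := by
    linarith [mul_nonneg (sub_nonneg.2 hcC) h2M, mul_nonneg hc0 (by linarith : 0 ≤ u + 2*M)]
  have hF0 : covidF Λ b q lam μ σ εA γA dA εI γI dI γH dH θ p β₁ β₂ y 0
      = Λ - c * y 0 * u + lam * y 1 - (μ + q) * y 0 := by rw [hcdef, hudef]; rfl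
  have hF1 : covidF Λ b q lam μ σ εA γA dA εI γI dI γH dH θ p β₁ β₂ y 1
      = q * y 0 - (μ + lam) * y 1 := rfl
  have hF2 : covidF Λ b q lam μ σ εA γA dA εI γI dI γH dH θ p β₁ β₂ y 2
      = c * y 0 * u - (μ + σ) * y 2 := by rw [hcdef, hudef]; rfl
  have hF3 : covidF Λ b q lam μ σ εA γA dA εI γI dI γH dH θ p β₁ β₂ y 3
      = (1 - p) * σ * y 2 - (μ + εA + γA + dA) * y 3 := rfl
  have hF4 : covidF Λ b q lam μ σ εA γA dA εI γI dI γH dH θ p β₁ β₂ y 4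
      = σ * p * y 2 - (μ + εI + γI + dI) * y 4 := rfl
  have hF5 : covidF Λ b q lam μ σ εA γA dA εI γI dI γH dH θ p β₁ β₂ y 5
      = εI * y 4 + εA * y 3 - (μ + dH + γH) * y 5 := rfl
  have hF6 : covidF Λ b q lam μ σ εA γA dA εI γI dI γH dH θ p β₁ β₂ y 6
      = γH * y 5 + γI * y 4 + γA * y 3 - μ * y 6 := rfl
  have hKlam : 0 ≤ K - lam := by rw [hKdef]; linarith [hCM2]
  have hKq : 0 ≤ K - q := by rw [hKdef]; linarith [hCM2]
  have hKσ : 0 ≤ K - σ := by rw [hKdef]; linarith [hCM2]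
  have hKCM2 : 0 ≤ K - 2*C*M := by rw [hKdef]; linarith
  have hKCM : 0 ≤ K - C*M := by rw [hKdef]; linarith [hCM]
  have hKεI : 0 ≤ K - εI := by rw [hKdef]; linarith [hCM2]
  have hKεA : 0 ≤ K - εA := by rw [hKdef]; linarith [hCM2]
  have hKγH : 0 ≤ K - γH := by rw [hKdef]; linarith [hCM2]
  have hKγI : 0 ≤ K - γI := by rw [hKdef]; linarith [hCM2]
  have hKγA : 0 ≤ K - γA := by rw [hKdef]; linarith [hCM2]
  fin_cases i
  · -- i = 0
    show -(covidF Λ b q lam μ σ εA γA dA εI γI dI γH dH θ p β₁ β₂ y 0) ≤ K * _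
    rw [hF0]
    have hy0 : y 0 ≤ 0 := hyi
    have h1 : c * u * y 0 ≤ -(C * (2*M)) * y 0 := mul_le_mul_of_nonpos_right hcu2 hy0
    linarith [h1, mul_le_mul_of_nonneg_left hn0' (mul_nonneg hC h2M),
      mul_le_mul_of_nonneg_left hn1' hlam.le,
      mul_nonneg hKCM2 hn0, mul_nonneg hKlam hn1,
      mul_nonneg hK hn2, mul_nonneg hK hn3, mul_nonneg hK hn4, mul_nonneg hK hn5, mul_nonneg hK hn6,
      mul_nonpos_of_nonneg_of_nonpos (by positivity : (0:ℝ) ≤ μ + q) hy0]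
  · -- i = 1
    show -(covidF Λ b q lam μ σ εA γA dA εI γI dI γH dH θ p β₁ β₂ y 1) ≤ K * _
    rw [hF1]
    have hy1 : y 1 ≤ 0 := hyi
    linarith [mul_le_mul_of_nonneg_left hn0' hq.le, mul_nonneg hKq hn0,
      mul_nonneg hK hn1, mul_nonneg hK hn2, mul_nonneg hK hn3, mul_nonneg hK hn4,
      mul_nonneg hK hn5, mul_nonneg hK hn6,
      mul_nonpos_of_nonneg_of_nonpos (by positivity : (0:ℝ) ≤ μ + lam) hy1]
  · -- i = 2
    show -(covidF Λ b q lam μ σ εA γA dA εI γI dI γH dH θ p β₁ β₂ y 2) ≤ K * _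
    rw [hF2]
    have hy2 : y 2 ≤ 0 := hyi
    have hG : -(c * y 0 * u) ≤ C * (2*M) * max (-(y 0)) 0 + C * M * (max (-(y 4)) 0 + max (-(y 3)) 0) := by
      rcases le_total (y 0) 0 with h0 | h0
      · have h1 : c * u * (-(y 0)) ≤ C * (2*M) * (-(y 0)) :=
          mul_le_mul_of_nonneg_right hcu1 (by linarith)
        have h2 : C * (2*M) * (-(y 0)) ≤ C * (2*M) * max (-(y 0)) 0 :=
          mul_le_mul_of_nonneg_left hn0' (mul_nonneg hC h2M)
        linarith [mul_nonneg (mul_nonneg hC hM0) (add_nonneg hn4 hn3)]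
      · have hcy : 0 ≤ c * y 0 := mul_nonneg hc0 h0
        have hcyM : c * y 0 ≤ C * M := mul_le_mul hcC (hbox 0).2 h0 hC
        have hu3 : -u ≤ max (-(y 4)) 0 + max (-(y 3)) 0 := by
          rw [hudef]
          have h1 := mul_le_mul_of_nonneg_left hn3' hθ.1.le
          have h2 : θ * max (-(y 3)) 0 ≤ 1 * max (-(y 3)) 0 :=
            mul_le_mul_of_nonneg_right hθ.2.le hn3
          linarith [hn4']
        have h1 : (c * y 0) * (-u) ≤ (c * y 0) * (max (-(y 4)) 0 + max (-(y 3)) 0) :=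
          mul_le_mul_of_nonneg_left hu3 hcy
        have h2 : (c * y 0) * (max (-(y 4)) 0 + max (-(y 3)) 0) ≤ C * M * (max (-(y 4)) 0 + max (-(y 3)) 0) :=
          mul_le_mul_of_nonneg_right hcyM (add_nonneg hn4 hn3)
        linarith [mul_nonneg (mul_nonneg hC h2M) hn0]
    linarith [hG, mul_nonneg hKCM2 hn0, mul_nonneg hKCM hn3, mul_nonneg hKCM hn4,
      mul_nonneg hK hn1, mul_nonneg hK hn2, mul_nonneg hK hn5, mul_nonneg hK hn6,
      mul_nonpos_of_nonneg_of_nonpos (by positivity : (0:ℝ) ≤ μ + σ) hy2]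
  · -- i = 3
    show -(covidF Λ b q lam μ σ εA γA dA εI γI dI γH dH θ p β₁ β₂ y 3) ≤ K * _
    rw [hF3]
    have hy3 : y 3 ≤ 0 := hyi
    have h1 : (1 - p) * σ * (-(y 2)) ≤ σ * max (-(y 2)) 0 := by
      have h2 := mul_le_mul_of_nonneg_left hn2'
        (mul_nonneg (by linarith [hp.2.le] : (0:ℝ) ≤ 1 - p) hσ.le)
      have h3 : 0 ≤ p * σ * max (-(y 2)) 0 := mul_nonneg (mul_nonneg hp.1.le hσ.le) hn2
      linarith [h2, h3]
    linarith [h1, mul_nonneg hKσ hn2,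
      mul_nonneg hK hn0, mul_nonneg hK hn1, mul_nonneg hK hn3, mul_nonneg hK hn4,
      mul_nonneg hK hn5, mul_nonneg hK hn6,
      mul_nonpos_of_nonneg_of_nonpos (by positivity : (0:ℝ) ≤ μ + εA + γA + dA) hy3]
  · -- i = 4
    show -(covidF Λ b q lam μ σ εA γA dA εI γI dI γH dH θ p β₁ β₂ y 4) ≤ K * _
    rw [hF4]
    have hy4 : y 4 ≤ 0 := hyi
    have h1 : σ * p * (-(y 2)) ≤ σ * max (-(y 2)) 0 := by
      have h2 := mul_le_mul_of_nonneg_left hn2' (mul_nonneg hσ.le hp.1.le)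
      have h3 : 0 ≤ σ * (1 - p) * max (-(y 2)) 0 :=
        mul_nonneg (mul_nonneg hσ.le (by linarith [hp.2.le] : (0:ℝ) ≤ 1 - p)) hn2
      linarith [h2, h3]
    linarith [h1, mul_nonneg hKσ hn2,
      mul_nonneg hK hn0, mul_nonneg hK hn1, mul_nonneg hK hn3, mul_nonneg hK hn4,
      mul_nonneg hK hn5, mul_nonneg hK hn6,
      mul_nonpos_of_nonneg_of_nonpos (by positivity : (0:ℝ) ≤ μ + εI + γI + dI) hy4]
  · -- i = 5
    show -(covidF Λ b q lam μ σ εA γA dA εI γI dI γH dH θ p β₁ β₂ y 5) ≤ K * _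
    rw [hF5]
    have hy5 : y 5 ≤ 0 := hyi
    linarith [mul_le_mul_of_nonneg_left hn4' hεI.le, mul_le_mul_of_nonneg_left hn3' hεA.le,
      mul_nonneg hKεI hn4, mul_nonneg hKεA hn3,
      mul_nonneg hK hn0, mul_nonneg hK hn1, mul_nonneg hK hn2, mul_nonneg hK hn5, mul_nonneg hK hn6,
      mul_nonneg hK hn3, mul_nonneg hK hn4,
      mul_nonpos_of_nonneg_of_nonpos (by positivity : (0:ℝ) ≤ μ + dH + γH) hy5]
  · -- i = 6
    show -(covidF Λ b q lam μ σ εA γA dA εI γI dI γH dH θ p β₁ β₂ y 6) ≤ K * _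
    rw [hF6]
    have hy6 : y 6 ≤ 0 := hyi
    linarith [mul_le_mul_of_nonneg_left hn5' hγH.le, mul_le_mul_of_nonneg_left hn4' hγI.le,
      mul_le_mul_of_nonneg_left hn3' hγA.le,
      mul_nonneg hKγH hn5, mul_nonneg hKγI hn4, mul_nonneg hKγA hn3,
      mul_nonneg hK hn0, mul_nonneg hK hn1, mul_nonneg hK hn2, mul_nonneg hK hn6,
      mul_nonpos_of_nonneg_of_nonpos hμ.le hy6]

open Set Filter

lemma aux_max_mul (a c : ℝ) (hc : 0 < c) : c * max (a / c) 0 = max a 0 := by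
  rcases le_total a 0 with h | h
  · rw [max_eq_right (div_nonpos_of_nonpos_of_nonneg h hc.le), max_eq_right h, mul_zero]
  · rw [max_eq_left (div_nonneg h hc.le), mul_div_cancel₀ _ hc.ne', max_eq_left h]

set_option maxHeartbeats 1000000 in
lemma covid_nonneg (Λ b q lam μ σ εA γA dA εI γI dI γH dH θ p β₁ β₂ : ℝ)
    (hΛ : 0 < Λ) (hb : 0 < b) (hq : 0 < q) (hlam : 0 < lam) (hμ : 0 < μ)
    (hσ : 0 < σ) (hεA : 0 < εA) (hγA : 0 < γA) (hdA : 0 < dA)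
    (hεI : 0 < εI) (hγI : 0 < γI) (hdI : 0 < dI) (hγH : 0 < γH) (hdH : 0 < dH)
    (hθ : θ ∈ Set.Ioo (0 : ℝ) 1) (hp : p ∈ Set.Ioo (0 : ℝ) 1)
    (hβ₂ : 0 < β₂) (hβ : β₂ ≤ β₁)
    (x : ℝ → Fin 7 → ℝ)
    (hx : ∀ t : ℝ, 0 ≤ t →
      HasDerivWithinAt x (covidF Λ b q lam μ σ εA γA dA εI γI dI γH dH θ p β₁ β₂ (x t))
        (Set.Ici (0 : ℝ)) t)
    (h0 : ∀ i, 0 ≤ x 0 i) :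
    ∀ t : ℝ, 0 ≤ t → ∀ i, 0 ≤ x t i := by
  have hd : ∀ t : ℝ, 0 ≤ t → ∀ i, HasDerivWithinAt (fun s => x s i)
      (covidF Λ b q lam μ σ εA γA dA εI γI dI γH dH θ p β₁ β₂ (x t) i) (Set.Ici 0) t :=
    fun t ht => hasDerivWithinAt_pi.mp (hx t ht)
  have hcont : ∀ (i : Fin 7) (t : ℝ), 0 ≤ t → ContinuousWithinAt (fun s => x s i) (Set.Ici 0) t :=
    fun i t ht => ((hd t ht) i).continuousWithinAt
  obtain ⟨φ, hφdef⟩ : ∃ φ : ℝ → ℝ, φ = fun s => ∑ i, max (-(x s i)) 0 := ⟨_, rfl⟩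
  have hφ0 : ∀ s, 0 ≤ φ s := by
    intro s; rw [hφdef]
    exact Finset.sum_nonneg fun j _ => le_max_right _ _
  have hφcont : ∀ t : ℝ, 0 ≤ t → ContinuousWithinAt φ (Set.Ici 0) t := by
    intro t ht; rw [hφdef]
    exact tendsto_finset_sum _ fun i _ =>
      ((hcont i t ht).tendsto.neg.max tendsto_const_nhds)
  have hφterm : ∀ s (i : Fin 7), max (-(x s i)) 0 ≤ φ s := by
    intro s i; rw [hφdef]
    exact Finset.single_le_sum (f := fun j => max (-(x s j)) 0)
      (fun j _ => le_max_right _ _) (Finset.mem_univ i)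
  by_contra hcon
  push_neg at hcon
  obtain ⟨t₀, ht₀, i₀, hneg⟩ := hcon
  have hφt₀ : 0 < φ t₀ :=
    lt_of_lt_of_le (lt_of_lt_of_le (by linarith : (0:ℝ) < -(x t₀ i₀)) (le_max_left _ _))
      (hφterm t₀ i₀)
  set A : Set ℝ := {s : ℝ | s ∈ Set.Icc 0 t₀ ∧ 0 < φ s} with hAdef
  have hAne : A.Nonempty := ⟨t₀, ⟨⟨ht₀, le_refl _⟩, hφt₀⟩⟩
  have hAbdd : BddBelow A := ⟨0, fun s hs => hs.1.1⟩
  set t₁ : ℝ := sInf A with ht₁def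
  have ht₁0 : 0 ≤ t₁ := le_csInf hAne fun s hs => hs.1.1
  have ht₁t₀ : t₁ ≤ t₀ := csInf_le hAbdd ⟨⟨ht₀, le_refl _⟩, hφt₀⟩
  have hφt₁ : φ t₁ = 0 := by
    rcases eq_or_lt_of_le (hφ0 t₁) with h | h
    · exact h.symm
    · exfalso
      have ht₁pos : 0 < t₁ := by
        rcases eq_or_lt_of_le ht₁0 with h' | h'
        · exfalso
          have : φ 0 = 0 := by
            rw [hφdef]
            exact Finset.sum_eq_zero fun j _ => max_eq_right (neg_nonpos.2 (h0 j))
          rw [← h'] at h; linarith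
        · exact h'
      have hev : ∀ᶠ s in nhdsWithin t₁ (Set.Ici 0), 0 < φ s :=
        ((hφcont t₁ ht₁0).tendsto).eventually_const_lt h
      obtain ⟨δ, hδ, hev⟩ := Metric.nhdsWithin_basis_ball.eventually_iff.mp hev
      set s₀ : ℝ := max (t₁ - δ/2) (t₁/2) with hs₀def
      have hs₀0 : (0:ℝ) ≤ s₀ := le_trans (by linarith) (le_max_right _ _)
      have hs₀lt : s₀ < t₁ := max_lt (by linarith) (by linarith)
      have hs₀dist : dist s₀ t₁ < δ := by
        rw [Real.dist_eq, abs_lt]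
        constructor
        · have := le_max_left (t₁ - δ/2) (t₁/2); linarith
        · linarith
      have hs₀A : s₀ ∈ A := ⟨⟨hs₀0, by linarith⟩, hev ⟨Metric.mem_ball.mpr hs₀dist, hs₀0⟩⟩
      have := csInf_le hAbdd hs₀A
      linarith
  have hxt₁ : ∀ i, 0 ≤ x t₁ i := by
    intro i
    have h1 := hφterm t₁ i
    rw [hφt₁] at h1
    have h2 := le_max_left (-(x t₁ i)) 0
    have h3 := le_max_right (-(x t₁ i)) (0:ℝ)
    nlinarith [h1, h2]
  obtain ⟨M, hMdef⟩ : ∃ M : ℝ, M = (∑ j, x t₁ j) + b/2 + 1 := ⟨_, rfl⟩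
  have hsumnn : 0 ≤ ∑ j, x t₁ j := Finset.sum_nonneg fun j _ => hxt₁ j
  have hMb : b/2 ≤ M := by rw [hMdef]; linarith
  have hMx : ∀ i, x t₁ i + 1 ≤ M := by
    intro i
    have := Finset.single_le_sum (fun j _ => hxt₁ j) (Finset.mem_univ i)
    rw [hMdef]; linarith
  obtain ⟨ε₀, hε₀def⟩ : ∃ ε₀ : ℝ, ε₀ = min (b/2) 1 := ⟨_, rfl⟩
  have hε₀pos : 0 < ε₀ := by rw [hε₀def]; positivity
  have hevbox : ∀ᶠ s in nhdsWithin t₁ (Set.Ici 0), ∀ i, dist (x s i) (x t₁ i) < ε₀ := by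
    rw [eventually_all]
    intro i
    exact Metric.tendsto_nhds.mp ((hcont i t₁ ht₁0).tendsto) ε₀ hε₀pos
  obtain ⟨δ, hδpos, hδ⟩ := Metric.nhdsWithin_basis_ball.eventually_iff.mp hevbox
  have hbox' : ∀ s, t₁ ≤ s → s < t₁ + δ → ∀ i, -(b/2) ≤ x s i ∧ x s i ≤ M := by
    intro s hs1 hs2 i
    have hs0 : (0:ℝ) ≤ s := le_trans ht₁0 hs1
    have hdist : dist s t₁ < δ := by rw [Real.dist_eq, abs_lt]; constructor <;> linarith
    have h1 := hδ ⟨Metric.mem_ball.mpr hdist, hs0⟩ i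
    rw [Real.dist_eq, abs_lt] at h1
    have hε₁ : ε₀ ≤ b/2 := by rw [hε₀def]; exact min_le_left _ _
    have hε₂ : ε₀ ≤ 1 := by rw [hε₀def]; exact min_le_right _ _
    constructor
    · have := hxt₁ i; linarith
    · have := hMx i; linarith
  obtain ⟨a, haA, ha⟩ := exists_lt_of_csInf_lt hAne (by linarith : sInf A < t₁ + δ)
  have ht₁a : t₁ ≤ a := csInf_le hAbdd haA
  obtain ⟨K, hKdef⟩ : ∃ K : ℝ,
      K = 2*(β₁ + 2*β₂*M/b)*M + lam + q + σ + εI + εA + γI + γA + γH := ⟨_, rfl⟩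
  have hβ₁ : 0 < β₁ := lt_of_lt_of_le hβ₂ hβ
  have hM0 : 0 ≤ M := le_trans (by positivity) hMb
  have hK0 : 0 ≤ K := by rw [hKdef]; positivity
  -- Gronwall on [t₁, a]
  have hgron := le_gronwallBound_of_liminf_deriv_right_le
    (f := φ) (f' := fun s => 7*K*φ s) (δ := 0) (K := 7*K) (ε := 0) (a := t₁) (b := a)
    (fun s hs => (hφcont s (le_trans ht₁0 hs.1)).mono fun z hz => le_trans ht₁0 hz.1)
    ?_ (le_of_eq hφt₁) (fun s _ => by rw [add_zero])
  · have hfin := hgron a ⟨ht₁a, le_refl _⟩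
    rw [gronwallBound_ε0_δ0] at hfin
    have := haA.2
    linarith
  · -- the liminf slope condition
    intro s hs r hr
    have hs0 : (0:ℝ) ≤ s := le_trans ht₁0 hs.1
    have hsbox : ∀ i, -(b/2) ≤ x s i ∧ x s i ≤ M :=
      hbox' s hs.1 (lt_of_lt_of_le (lt_of_lt_of_le hs.2 (le_of_lt ha)) (le_refl _)) 
    have hkey : ∀ i : Fin 7, x s i ≤ 0 →
        -(covidF Λ b q lam μ σ εA γA dA εI γI dI γH dH θ p β₁ β₂ (x s) i) ≤ K * φ s := by
      intro i hi
      have := covid_key Λ b q lam μ σ εA γA dA εI γI dI γH dH θ p β₁ β₂ M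
        hΛ hb hq hlam hμ hσ hεA hγA hdA hεI hγI hdI hγH hdH hθ hp hβ₂ hβ hMb
        (x s) hsbox i hi
      rw [hφdef, ← hKdef] at *
      exact this
    obtain ⟨L, hLdef⟩ : ∃ L : ℝ, L = ∑ i, if x s i ≤ 0 then
        max (-(covidF Λ b q lam μ σ εA γA dA εI γI dI γH dH θ p β₁ β₂ (x s) i)) 0 else 0 :=
      ⟨_, rfl⟩
    have hL : L < r := by
      have h1 : L ≤ 7 * (K * φ s) := by
        rw [hLdef]
        calc ∑ i : Fin 7, (if x s i ≤ 0 then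
              max (-(covidF Λ b q lam μ σ εA γA dA εI γI dI γH dH θ p β₁ β₂ (x s) i)) 0 else 0)
            ≤ ∑ _i : Fin 7, K * φ s := by
              apply Finset.sum_le_sum
              intro i _
              by_cases h : x s i ≤ 0
              · rw [if_pos h]
                exact max_le (hkey i h) (mul_nonneg hK0 (hφ0 s))
              · rw [if_neg h]
                exact mul_nonneg hK0 (hφ0 s)
          _ = 7 * (K * φ s) := by
              rw [Finset.sum_const, Finset.card_univ, Fintype.card_fin]
              norm_num
      calc L ≤ 7 * (K * φ s) := h1
        _ = 7 * K * φ s := by ring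
        _ < r := hr
    -- slope tendsto for each component
    have hslope : ∀ i : Fin 7, Tendsto (fun z => (x s i - x z i) / (z - s)) (nhdsWithin s (Set.Ioi s))
        (nhds (-(covidF Λ b q lam μ σ εA γA dA εI γI dI γH dH θ p β₁ β₂ (x s) i))) := by
      intro i
      have h1 := (hd s hs0) i
      rw [hasDerivWithinAt_iff_tendsto_slope] at h1
      have hsub : Set.Ioi s ⊆ Set.Ici (0:ℝ) \ {s} :=
        fun z hz => ⟨le_trans hs0 (le_of_lt hz), ne_of_gt hz⟩
      have h2 := (h1.mono_left (nhdsWithin_mono _ hsub)).neg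
      have h3 : (fun z => -(slope (fun u => x u i) s z)) = fun z => (x s i - x z i) / (z - s) := by
        funext z
        rw [slope_def_field]
        ring
      rwa [h3] at h2
    obtain ⟨G, hGdef⟩ : ∃ G : ℝ → ℝ, G = fun z => ∑ i, if x s i ≤ 0 then
        max ((x s i - x z i) / (z - s)) 0 else 0 := ⟨_, rfl⟩
    have hGtendsto : Tendsto G (nhdsWithin s (Set.Ioi s)) (nhds L) := by
      rw [hGdef, hLdef]
      apply tendsto_finset_sum
      intro i _
      by_cases h : x s i ≤ 0
      · simp only [if_pos h]
        exact (hslope i).max tendsto_const_nhds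
      · simp only [if_neg h]
        exact tendsto_const_nhds
    have ev1 : ∀ᶠ z in nhdsWithin s (Set.Ioi s), G z < r := hGtendsto.eventually_lt_const hL
    have ev2 : ∀ᶠ z in nhdsWithin s (Set.Ioi s), ∀ i, 0 < x s i → 0 < x z i := by
      rw [eventually_all]
      intro i
      by_cases h : 0 < x s i
      · have h1 : Tendsto (fun z => x z i) (nhdsWithin s (Set.Ioi s)) (nhds (x s i)) :=
          ((hcont i s hs0).tendsto).mono_left
            (nhdsWithin_mono _ fun z hz => le_trans hs0 (le_of_lt hz))
        exact (h1.eventually_const_lt h).mono fun z hz _ => hz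
      · exact Filter.Eventually.of_forall fun z h' => absurd h' h
    have ev3 : ∀ᶠ z in nhdsWithin s (Set.Ioi s), s < z :=
      eventually_mem_nhdsWithin
    apply ((ev1.and (ev2.and ev3)).mono _).frequently
    rintro z ⟨hGz, hpos, hz⟩
    have hzs : 0 < z - s := by linarith
    have hterm : ∀ i : Fin 7, max (-(x z i)) 0 - max (-(x s i)) 0 ≤
        (z - s) * (if x s i ≤ 0 then max ((x s i - x z i) / (z - s)) 0 else 0) := by
      intro i
      by_cases h : x s i ≤ 0
      · rw [if_pos h, aux_max_mul _ _ hzs]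
        have h1 : max (-(x s i)) 0 = -(x s i) := max_eq_left (by linarith)
        rcases le_total (x z i) 0 with h2 | h2
        · rw [max_eq_left (by linarith : (0:ℝ) ≤ -(x z i)), h1]
          have := le_max_left (x s i - x z i) (0:ℝ); linarith
        · rw [max_eq_right (by linarith : -(x z i) ≤ (0:ℝ)), h1]
          have := le_max_right (x s i - x z i) (0:ℝ); linarith
      · rw [if_neg h, mul_zero]
        push_neg at h
        have h1 : max (-(x s i)) 0 = 0 := max_eq_right (by linarith)
        have h2 : max (-(x z i)) 0 = 0 := max_eq_right (by linarith [hpos i h])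
        rw [h1, h2]; linarith
    have hsum : φ z - φ s ≤ (z - s) * G z := by
      rw [hφdef, hGdef]
      simp only
      rw [← Finset.sum_sub_distrib, Finset.mul_sum]
      exact Finset.sum_le_sum fun i _ => hterm i
    have h4 : (z - s)⁻¹ * (φ z - φ s) ≤ G z := by
      rw [inv_mul_le_iff₀ hzs]
      calc φ z - φ s ≤ (z - s) * G z := hsum
        _ = (z - s) * G z := rfl
    linarith

set_option maxHeartbeats 1000000 in
/-- for every `η ≥ 0`, the region
`D^η = { x ≥ 0 : N(x) ≤ Λ/μ + η }` is positively invariant. -/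
theorem covid_region_Deta_positively_invariant
    (Λ b q lam μ σ εA γA dA εI γI dI γH dH θ p β₁ β₂ : ℝ)
    (hΛ : 0 < Λ) (hb : 0 < b) (hq : 0 < q) (hlam : 0 < lam) (hμ : 0 < μ)
    (hσ : 0 < σ) (hεA : 0 < εA) (hγA : 0 < γA) (hdA : 0 < dA)
    (hεI : 0 < εI) (hγI : 0 < γI) (hdI : 0 < dI) (hγH : 0 < γH) (hdH : 0 < dH)
    (hθ : θ ∈ Set.Ioo (0 : ℝ) 1) (hp : p ∈ Set.Ioo (0 : ℝ) 1)
    (hβ₂ : 0 < β₂) (hβ : β₂ ≤ β₁)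
    (η : ℝ) (hη : 0 ≤ η)
    (x : ℝ → Fin 7 → ℝ)
    (hx : IsSolution (covidF Λ b q lam μ σ εA γA dA εI γI dI γH dH θ p β₁ β₂) x)
    (h0 : (∀ i, 0 ≤ x 0 i) ∧ (∑ i, x 0 i) ≤ Λ / μ + η) :
    ∀ t : ℝ, 0 ≤ t → (∀ i, 0 ≤ x t i) ∧ (∑ i, x t i) ≤ Λ / μ + η := by
  have hnn := covid_nonneg Λ b q lam μ σ εA γA dA εI γI dI γH dH θ p β₁ β₂
    hΛ hb hq hlam hμ hσ hεA hγA hdA hεI hγI hdI hγH hdH hθ hp hβ₂ hβ x hx h0.1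
  intro t ht
  refine ⟨hnn t ht, ?_⟩
  have hd : ∀ s : ℝ, 0 ≤ s → ∀ i, HasDerivWithinAt (fun u => x u i)
      (covidF Λ b q lam μ σ εA γA dA εI γI dI γH dH θ p β₁ β₂ (x s) i) (Set.Ici 0) s :=
    fun s hs => hasDerivWithinAt_pi.mp (hx s hs)
  have hcontsum : ContinuousOn (fun s => ∑ i, x s i) (Set.Icc 0 t) := by
    intro s hs
    have : Tendsto (fun u => ∑ i, x u i) (nhdsWithin s (Set.Icc 0 t)) (nhds (∑ i, x s i)) :=
      tendsto_finset_sum _ fun i _ =>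
        (((hd s hs.1) i).continuousWithinAt.mono fun z hz => hz.1).tendsto
    exact this
  have hslope' : ∀ s ∈ Set.Ico 0 t, ∀ r,
      (∑ i, covidF Λ b q lam μ σ εA γA dA εI γI dI γH dH θ p β₁ β₂ (x s) i) < r →
      ∃ᶠ z in nhdsWithin s (Set.Ioi s),
        (z - s)⁻¹ * ((∑ i, x z i) - ∑ i, x s i) < r := by
    intro s hs r hr
    have hds : HasDerivWithinAt (fun u => ∑ i, x u i)
        (∑ i, covidF Λ b q lam μ σ εA γA dA εI γI dI γH dH θ p β₁ β₂ (x s) i)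
        (Set.Ici 0) s := HasDerivWithinAt.fun_sum fun i _ => (hd s hs.1) i
    rw [hasDerivWithinAt_iff_tendsto_slope] at hds
    have hsub : Set.Ioi s ⊆ Set.Ici (0:ℝ) \ {s} :=
      fun z hz => ⟨le_trans hs.1 (le_of_lt hz), ne_of_gt hz⟩
    have h2 := hds.mono_left (nhdsWithin_mono _ hsub)
    have h3 : (slope (fun u => ∑ i, x u i) s) =
        fun z => (z - s)⁻¹ * ((∑ i, x z i) - ∑ i, x s i) := by
      funext z
      rw [slope_def_field, div_eq_inv_mul]
    rw [h3] at h2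
    exact (h2.eventually_lt_const hr).frequently
  have hbound : ∀ s ∈ Set.Ico 0 t,
      (∑ i, covidF Λ b q lam μ σ εA γA dA εI γI dI γH dH θ p β₁ β₂ (x s) i) ≤
        -μ * (∑ i, x s i) + Λ := by
    intro s hs
    have hnns := hnn s hs.1
    have e0 : covidF Λ b q lam μ σ εA γA dA εI γI dI γH dH θ p β₁ β₂ (x s) 0
        = Λ - (β₁ - β₂ * x s 4 / (b + x s 4)) * x s 0 * (x s 4 + θ * x s 3)
          + lam * x s 1 - (μ + q) * x s 0 := rfl
    have e1 : covidF Λ b q lam μ σ εA γA dA εI γI dI γH dH θ p β₁ β₂ (x s) 1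
        = q * x s 0 - (μ + lam) * x s 1 := rfl
    have e2 : covidF Λ b q lam μ σ εA γA dA εI γI dI γH dH θ p β₁ β₂ (x s) 2
        = (β₁ - β₂ * x s 4 / (b + x s 4)) * x s 0 * (x s 4 + θ * x s 3)
          - (μ + σ) * x s 2 := rfl
    have e3 : covidF Λ b q lam μ σ εA γA dA εI γI dI γH dH θ p β₁ β₂ (x s) 3
        = (1 - p) * σ * x s 2 - (μ + εA + γA + dA) * x s 3 := rfl
    have e4 : covidF Λ b q lam μ σ εA γA dA εI γI dI γH dH θ p β₁ β₂ (x s) 4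
        = σ * p * x s 2 - (μ + εI + γI + dI) * x s 4 := rfl
    have e5 : covidF Λ b q lam μ σ εA γA dA εI γI dI γH dH θ p β₁ β₂ (x s) 5
        = εI * x s 4 + εA * x s 3 - (μ + dH + γH) * x s 5 := rfl
    have e6 : covidF Λ b q lam μ σ εA γA dA εI γI dI γH dH θ p β₁ β₂ (x s) 6
        = γH * x s 5 + γI * x s 4 + γA * x s 3 - μ * x s 6 := rfl
    rw [Fin.sum_univ_seven, Fin.sum_univ_seven, e0, e1, e2, e3, e4, e5, e6]
    have h3 := mul_nonneg hdA.le (hnns 3)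
    have h4 := mul_nonneg hdI.le (hnns 4)
    have h5 := mul_nonneg hdH.le (hnns 5)
    nlinarith [h3, h4, h5]
  have hgron := le_gronwallBound_of_liminf_deriv_right_le
    (f' := fun s => ∑ i, covidF Λ b q lam μ σ εA γA dA εI γI dI γH dH θ p β₁ β₂ (x s) i)
    hcontsum hslope' h0.2 hbound t ⟨ht, le_refl _⟩
  rw [sub_zero] at hgron
  have hKne : (-μ) ≠ 0 := neg_ne_zero.mpr hμ.ne'
  rw [gronwallBound_of_K_ne_0 hKne] at hgron
  simp only at hgron
  have hE1 : Real.exp (-μ * t) ≤ 1 := by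
    rw [← Real.exp_zero]
    exact Real.exp_le_exp.mpr (by nlinarith)
  have hdiv : Λ / (-μ) = -(Λ/μ) := by rw [div_neg]
  rw [hdiv] at hgron
  have h1 : Λ/μ ≤ Λ/μ + η := by linarith
  have h2 : (Λ/μ) * (1 - Real.exp (-μ*t)) ≤ (Λ/μ + η) * (1 - Real.exp (-μ*t)) :=
    mul_le_mul_of_nonneg_right h1 (by linarith)
  nlinarith [hgron, h2]
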